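/- The Gaussian mechanism M(D) = f(D) + N(0, σ²C²) where f has ℓ₂-sensitivity C satisfies (α, α/(2σ²))-RDP for every α > 1. -/

import Mathlib

open MeasureTheory ProbabilityTheory
open scoped ENNReal NNReal

/-- Rényi divergence of order `α` between `P` and `Q`. -/
noncomputable def renyiDiv {Ω : Type*} [MeasurableSpace Ω] (α : ℝ)
    (P Q : Measure Ω) : ℝ :=
  (α - 1)⁻¹ * Real.log (∫ x, ((P.rnDeriv Q x).toReal) ^ α ∂Q)

theorem my_lintegral_fin_prod {n : ℕ} (f : Fin n → ℝ → ℝ≥0∞) (hf : ∀ i, Measurable (f i)) :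
    ∫⁻ x : Fin n → ℝ, ∏ i, f i (x i) = ∏ i, (∫⁻ t, f i t) := by
  induction n with
  | zero => simp [lintegral_const, volume_pi, Measure.pi_univ]
  | succ n ih =>
    have h := (measurePreserving_piFinSuccAbove (fun _ : Fin (n+1) => (volume : Measure ℝ)) 0)
    rw [volume_pi, ← (MeasurePreserving.symm _ h).lintegral_comp
      (f := fun x : Fin (n+1) → ℝ => ∏ i, f i (x i))
      (Finset.measurable_prod _ fun i _ => (hf i).comp (measurable_pi_apply i))]
    simp only [MeasurableEquiv.piFinSuccAbove_symm_apply, Fin.insertNthEquiv,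
      Fin.prod_univ_succ, Fin.insertNth_zero, Equiv.coe_fn_mk, cast_eq,
      Fin.zero_succAbove, Fin.cons_zero, Fin.cons_succ]
    rw [lintegral_prod_mul (f := f 0) (g := fun b : Fin n → ℝ => ∏ i, f i.succ (b i))
      (hf 0).aemeasurable
      (Finset.measurable_prod _ fun i _ =>
        (hf i.succ).comp (measurable_pi_apply i)).aemeasurable]
    rw [← volume_pi, ih (fun i => f i.succ) (fun i => hf i.succ)]

theorem my_pi_gauss_withDensity {d : ℕ} (μ : Fin d → ℝ) {v : ℝ≥0} (hv : v ≠ 0) :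
    Measure.pi (fun i => gaussianReal (μ i) v) =
      (volume : Measure (Fin d → ℝ)).withDensity
        (fun z => ENNReal.ofReal (∏ i, gaussianPDFReal (μ i) v (z i))) := by
  refine Measure.pi_eq (μ := fun i => gaussianReal (μ i) v) fun s hs => ?_
  rw [withDensity_apply _ (MeasurableSet.univ_pi hs)]
  have h1 : ∀ z : Fin d → ℝ, ENNReal.ofReal (∏ i, gaussianPDFReal (μ i) v (z i))
      = ∏ i, gaussianPDF (μ i) v (z i) := fun z =>
    ENNReal.ofReal_prod_of_nonneg (fun i _ => gaussianPDFReal_nonneg _ _ _)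
  simp_rw [h1]
  rw [← lintegral_indicator (MeasurableSet.univ_pi hs) _]
  have h2 : (Set.univ.pi s).indicator (fun z => ∏ i, gaussianPDF (μ i) v (z i))
      = fun z => ∏ i, (s i).indicator (gaussianPDF (μ i) v) (z i) := by
    funext z
    by_cases hz : z ∈ Set.univ.pi s
    · rw [Set.indicator_of_mem hz]
      exact Finset.prod_congr rfl fun i _ =>
        (Set.indicator_of_mem (hz i (Set.mem_univ i)) _).symm
    · rw [Set.indicator_of_notMem hz]
      simp only [Set.mem_univ_pi, not_forall] at hz
      obtain ⟨i, hi⟩ := hz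
      exact (Finset.prod_eq_zero (Finset.mem_univ i)
        (Set.indicator_of_notMem hi _)).symm
  rw [h2, my_lintegral_fin_prod _ (fun i => (measurable_gaussianPDF _ _).indicator (hs i))]
  exact Finset.prod_congr rfl fun i _ => by
    rw [lintegral_indicator (hs i) _, gaussianReal_apply _ hv]

theorem my_map_add_pi_gauss {d : ℕ} (μ : Fin d → ℝ) (v : ℝ≥0) :
    Measure.map (fun z => μ + z) (Measure.pi fun _ : Fin d => gaussianReal 0 v) =
      Measure.pi (fun i => gaussianReal (μ i) v) := by
  refine (Measure.pi_eq (μ := fun i => gaussianReal (μ i) v) fun s hs => ?_).symm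
  rw [Measure.map_apply (measurable_const_add μ) (MeasurableSet.univ_pi hs)]
  have hpre : (fun z : Fin d → ℝ => μ + z) ⁻¹' Set.univ.pi s
      = Set.univ.pi (fun i => (fun t => μ i + t) ⁻¹' s i) := by
    ext z
    simp [Set.mem_pi]
  rw [hpre, Measure.pi_pi]
  exact Finset.prod_congr rfl fun i _ => by
    rw [← Measure.map_apply (measurable_const_add (μ i)) (hs i),
      gaussianReal_map_const_add, zero_add]

theorem my_ratio_rpow (a b : ℝ) {v : ℝ≥0} (hv : v ≠ 0) (α t : ℝ) :
    (gaussianPDFReal a v t / gaussianPDFReal b v t) ^ α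
      = Real.exp (α * ((t - b) ^ 2 - (t - a) ^ 2) / (2 * (v : ℝ))) := by
  have hvpos : 0 < (v : ℝ) := by positivity
  have hc : (0:ℝ) < (Real.sqrt (2 * Real.pi * v))⁻¹ := by positivity
  rw [gaussianPDFReal, gaussianPDFReal, mul_div_mul_left _ _ (ne_of_gt hc),
    ← Real.exp_sub, Real.rpow_def_of_pos (Real.exp_pos _), Real.log_exp, Real.exp_eq_exp]
  field_simp
  ring

theorem my_gauss_integral (a b : ℝ) {v : ℝ≥0} (hv : v ≠ 0) (α : ℝ) :
    ∫ t, gaussianPDFReal b v t * Real.exp (α * ((t - b) ^ 2 - (t - a) ^ 2) / (2 * (v : ℝ)))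
      = Real.exp (α * (α - 1) * (a - b) ^ 2 / (2 * (v : ℝ))) := by
  have hvpos : 0 < (v : ℝ) := by positivity
  have key : ∀ t, gaussianPDFReal b v t * Real.exp (α * ((t - b) ^ 2 - (t - a) ^ 2) / (2 * (v:ℝ)))
      = Real.exp (α * (α - 1) * (a - b) ^ 2 / (2 * (v:ℝ)))
        * gaussianPDFReal (b + α * (a - b)) v t := by
    intro t
    rw [gaussianPDFReal, gaussianPDFReal, mul_assoc, ← Real.exp_add, mul_left_comm,
      ← Real.exp_add]
    congr 1
    field_simp
    ring
  simp_rw [key]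
  rw [integral_const_mul, integral_gaussianPDFReal_eq_one _ hv, mul_one]

theorem my_renyi_gauss {d : ℕ} (μ₁ μ₂ : Fin d → ℝ) {v : ℝ≥0} (hv : v ≠ 0)
    (α : ℝ) (hα : 1 < α) :
    renyiDiv α (Measure.map (fun z => μ₁ + z) (Measure.pi fun _ : Fin d => gaussianReal 0 v))
      (Measure.map (fun z => μ₂ + z) (Measure.pi fun _ : Fin d => gaussianReal 0 v))
    = α * (∑ i, (μ₁ i - μ₂ i) ^ 2) / (2 * (v : ℝ)) := by
  have hvpos : (0:ℝ) < v := by positivity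
  set P := Measure.map (fun z => μ₁ + z) (Measure.pi fun _ : Fin d => gaussianReal 0 v) with hP
  set Q := Measure.map (fun z => μ₂ + z) (Measure.pi fun _ : Fin d => gaussianReal 0 v) with hQ
  set pR : (Fin d → ℝ) → ℝ := fun z => ∏ i, gaussianPDFReal (μ₁ i) v (z i) with hpRdef
  set qR : (Fin d → ℝ) → ℝ := fun z => ∏ i, gaussianPDFReal (μ₂ i) v (z i) with hqRdef
  have hPd : P = (volume : Measure (Fin d → ℝ)).withDensity
      (fun z => ENNReal.ofReal (pR z)) := by
    rw [hP, my_map_add_pi_gauss, my_pi_gauss_withDensity _ hv]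
  have hQd : Q = (volume : Measure (Fin d → ℝ)).withDensity
      (fun z => ENNReal.ofReal (qR z)) := by
    rw [hQ, my_map_add_pi_gauss, my_pi_gauss_withDensity _ hv]
  have hpPos : ∀ z, 0 < pR z := fun z =>
    Finset.prod_pos fun i _ => gaussianPDFReal_pos _ _ _ hv
  have hqPos : ∀ z, 0 < qR z := fun z =>
    Finset.prod_pos fun i _ => gaussianPDFReal_pos _ _ _ hv
  have hmpR : Measurable pR := Finset.measurable_prod _ fun i _ =>
    (measurable_gaussianPDFReal _ _).comp (measurable_pi_apply i)
  have hmqR : Measurable qR := Finset.measurable_prod _ fun i _ =>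
    (measurable_gaussianPDFReal _ _).comp (measurable_pi_apply i)
  have hmp : Measurable fun z => ENNReal.ofReal (pR z) :=
    ENNReal.measurable_ofReal.comp hmpR
  have hmq : Measurable fun z => ENNReal.ofReal (qR z) :=
    ENNReal.measurable_ofReal.comp hmqR
  have hg : Measurable fun z => ENNReal.ofReal (pR z) / ENNReal.ofReal (qR z) := hmp.div hmq
  have hPQ : P = Q.withDensity
      (fun z => ENNReal.ofReal (pR z) / ENNReal.ofReal (qR z)) := by
    rw [hQd, ← withDensity_mul _ hmq hg, hPd]
    congr 1
    funext z
    exact (ENNReal.mul_div_cancel (by simp [ENNReal.ofReal_pos.mpr (hqPos z), ne_of_gt])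
      ENNReal.ofReal_ne_top).symm
  have hQprob : IsProbabilityMeasure Q := by
    rw [hQ, my_map_add_pi_gauss]; infer_instance
  have hrn : P.rnDeriv Q =ᵐ[Q]
      fun z => ENNReal.ofReal (pR z) / ENNReal.ofReal (qR z) := by
    rw [hPQ]; exact Measure.rnDeriv_withDensity _ hg
  have hI : ∫ z, ((P.rnDeriv Q z).toReal) ^ α ∂Q
      = Real.exp (α * (α - 1) * (∑ i, (μ₁ i - μ₂ i) ^ 2) / (2 * (v : ℝ))) := by
    have h1 : ∫ z, ((P.rnDeriv Q z).toReal) ^ α ∂Q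
        = ∫ z, (((ENNReal.ofReal (pR z) / ENNReal.ofReal (qR z)).toReal) ^ α) ∂Q := by
      refine integral_congr_ae ?_
      filter_upwards [hrn] with z hz
      rw [hz]
    rw [h1, hQd,
      show (fun z => ENNReal.ofReal (qR z))
        = (fun z => ((Real.toNNReal (qR z) : ℝ≥0) : ℝ≥0∞)) from rfl,
      integral_withDensity_eq_integral_smul
        (f := fun z => Real.toNNReal (qR z)) (fun s hs => (measurable_real_toNNReal.comp hmqR) hs) _]
    have hpt : ∀ z : Fin d → ℝ, Real.toNNReal (qR z)
          • (((ENNReal.ofReal (pR z) / ENNReal.ofReal (qR z)).toReal) ^ α)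
        = ∏ i, (gaussianPDFReal (μ₂ i) v (z i) *
            Real.exp (α * ((z i - μ₂ i) ^ 2 - (z i - μ₁ i) ^ 2) / (2 * (v : ℝ)))) := by
      intro z
      rw [NNReal.smul_def, smul_eq_mul, Real.coe_toNNReal _ (hqPos z).le,
        ENNReal.toReal_div, ENNReal.toReal_ofReal (hpPos z).le,
        ENNReal.toReal_ofReal (hqPos z).le, hpRdef, hqRdef]
      simp only
      rw [← Finset.prod_div_distrib,
        ← Real.finset_prod_rpow _ _ (fun i _ => div_nonneg (gaussianPDFReal_nonneg _ _ _) (gaussianPDFReal_nonneg _ _ _)) α,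
        ← Finset.prod_mul_distrib]
      refine Finset.prod_congr rfl fun i _ => ?_
      rw [my_ratio_rpow _ _ hv]
    simp_rw [hpt]
    rw [MeasureTheory.integral_fintype_prod_volume_eq_prod
      (fun i t => gaussianPDFReal (μ₂ i) v t *
        Real.exp (α * ((t - μ₂ i) ^ 2 - (t - μ₁ i) ^ 2) / (2 * (v : ℝ))))]
    rw [Finset.prod_congr rfl fun i _ => my_gauss_integral (μ₁ i) (μ₂ i) hv α,
      ← Real.exp_sum]
    congr 1
    rw [← Finset.sum_div, ← Finset.mul_sum]
  rw [renyiDiv, hI, Real.log_exp]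
  have hα1 : α - 1 ≠ 0 := sub_ne_zero.mpr (ne_of_gt hα)
  field_simp

/-- The Gaussian mechanism `M(D) = f(D) + N(0, σ²C² I_d)`, where `f` has
`ℓ₂`-sensitivity `C`, satisfies `(α, α/(2σ²))`-RDP for every `α > 1`. -/
theorem gaussian_mechanism_rdp {D : Type*} (adj : D → D → Prop) (d : ℕ)
    (f : D → (Fin d → ℝ)) (C σ : ℝ) (hC : 0 < C) (hσ : 0 < σ)
    (hsens : ∀ x y, adj x y → Real.sqrt (∑ i, (f x i - f y i) ^ 2) ≤ C)
    (α : ℝ) (hα : 1 < α) :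
    ∀ x y, adj x y →
      renyiDiv α
        (Measure.map (fun z => f x + z)
          (Measure.pi fun _ : Fin d => gaussianReal 0 ⟨σ ^ 2 * C ^ 2, by positivity⟩))
        (Measure.map (fun z => f y + z)
          (Measure.pi fun _ : Fin d => gaussianReal 0 ⟨σ ^ 2 * C ^ 2, by positivity⟩))
      ≤ α / (2 * σ ^ 2) := by
  intro x y hxy
  have hvR : (((⟨σ ^ 2 * C ^ 2, by positivity⟩ : ℝ≥0)) : ℝ) = σ ^ 2 * C ^ 2 := rfl
  have hv : (⟨σ ^ 2 * C ^ 2, by positivity⟩ : ℝ≥0) ≠ 0 := by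
    intro h
    have h2 : ((⟨σ ^ 2 * C ^ 2, by positivity⟩ : ℝ≥0) : ℝ) = 0 := by rw [h]; rfl
    rw [hvR] at h2
    nlinarith [pow_pos hC 2, pow_pos hσ 2]
  rw [my_renyi_gauss (f x) (f y) hv α hα]
  show α * (∑ i, (f x i - f y i) ^ 2) / (2 * (σ ^ 2 * C ^ 2)) ≤ α / (2 * σ ^ 2)
  have h0 : (0:ℝ) ≤ ∑ i, (f x i - f y i) ^ 2 :=
    Finset.sum_nonneg fun i _ => sq_nonneg _
  have hS : (∑ i, (f x i - f y i) ^ 2) ≤ C ^ 2 := by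
    have h1 := hsens x y hxy
    nlinarith [Real.sq_sqrt h0, Real.sqrt_nonneg (∑ i, (f x i - f y i) ^ 2)]
  have hα0 : (0:ℝ) < α := lt_trans one_pos hα
  rw [div_le_div_iff₀ (by positivity) (by positivity)]
  nlinarith [mul_le_mul_of_nonneg_left hS (by positivity : (0:ℝ) ≤ α * (2 * σ ^ 2))]
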